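/- Let c₁, c₂ ∈ ℂ. The alternated filled Julia set K_{P_{c₁c₂}} is contained in the closed disk of radius max(2, |c₁|, |c₂|) centered at the origin; in particular K_{P_{c₁c₂}} is a bounded subset of ℂ. -/

import Mathlib

/-- The alternated orbit of `z₀` with parameters `c₁, c₂`:
`z_{n+1} = zₙ² + c₁` if `n` is even, `z_{n+1} = zₙ² + c₂` if `n` is odd. -/
def altOrbit (c₁ c₂ z₀ : ℂ) : ℕ → ℂ
  | 0 => z₀
  | n + 1 => if Even n then (altOrbit c₁ c₂ z₀ n) ^ 2 + c₁
             else (altOrbit c₁ c₂ z₀ n) ^ 2 + c₂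

/-- The alternated filled Julia set `K_{P_{c₁ c₂}}`. -/
def altK (c₁ c₂ : ℂ) : Set ℂ :=
  {z₀ | Bornology.IsBounded (Set.range (altOrbit c₁ c₂ z₀))}

lemma altOrbit_growth (c₁ c₂ z₀ : ℂ)
    (h : max 2 (max (‖c₁‖) (‖c₂‖)) < ‖z₀‖) :
    ∀ n, (‖z₀‖ - 1) ^ n * ‖z₀‖ ≤ ‖(altOrbit c₁ c₂ z₀ n)‖ := by
  have h2 : (2 : ℝ) < ‖z₀‖ := lt_of_le_of_lt (le_max_left _ _) h
  have hc₁ : ‖c₁‖ ≤ ‖z₀‖ :=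
    le_of_lt (lt_of_le_of_lt (le_trans (le_max_left _ _) (le_max_right _ _)) h)
  have hc₂ : ‖c₂‖ ≤ ‖z₀‖ :=
    le_of_lt (lt_of_le_of_lt (le_trans (le_max_right _ _) (le_max_right _ _)) h)
  have hl : (1 : ℝ) < ‖z₀‖ - 1 := by linarith
  intro n
  induction n with
  | zero => simp [altOrbit]
  | succ n ih =>
    have hpow : (1 : ℝ) ≤ (‖z₀‖ - 1) ^ n := one_le_pow₀ hl.le
    have hzn : ‖z₀‖ ≤ ‖(altOrbit c₁ c₂ z₀ n)‖ := by
      calc ‖z₀‖ = 1 * ‖z₀‖ := (one_mul _).symm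
        _ ≤ (‖z₀‖ - 1) ^ n * ‖z₀‖ :=
            mul_le_mul_of_nonneg_right hpow (by positivity)
        _ ≤ _ := ih
    set w := altOrbit c₁ c₂ z₀ n with hw
    have key : ∀ c : ℂ, ‖c‖ ≤ ‖z₀‖ →
        (‖z₀‖ - 1) ^ (n + 1) * ‖z₀‖ ≤ ‖(w ^ 2 + c)‖ := by
      intro c hc
      have h1 : ‖(w ^ 2)‖ ≤ ‖(w ^ 2 + c)‖ + ‖c‖ := by
        calc ‖(w ^ 2)‖ = ‖((w ^ 2 + c) + (-c))‖ := by ring_nf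
          _ ≤ ‖(w ^ 2 + c)‖ + ‖(-c)‖ := norm_add_le _ _
          _ = ‖(w ^ 2 + c)‖ + ‖c‖ := by rw [norm_neg]
      have hsq : ‖(w ^ 2)‖ = ‖w‖ ^ 2 := norm_pow _ _
      rw [pow_succ]
      nlinarith [ih, hzn, hsq, h1, hc, norm_nonneg c]
    show (‖z₀‖ - 1) ^ (n + 1) * ‖z₀‖ ≤
        ‖(if Even n then w ^ 2 + c₁ else w ^ 2 + c₂)‖
    split_ifs
    · exact key c₁ hc₁
    · exact key c₂ hc₂

theorem stmt_9 (c₁ c₂ : ℂ) :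
    altK c₁ c₂ ⊆ Metric.closedBall 0 (max 2 (max (‖c₁‖) (‖c₂‖))) ∧
    Bornology.IsBounded (altK c₁ c₂) := by
  have hsub : altK c₁ c₂ ⊆
      Metric.closedBall 0 (max 2 (max (‖c₁‖) (‖c₂‖))) := by
    intro z₀ hz₀
    by_contra hout
    have h : max 2 (max (‖c₁‖) (‖c₂‖)) < ‖z₀‖ := by
      have := Metric.mem_closedBall.not.mp hout
      push_neg at this
      simpa [Complex.dist_eq] using this
    have hz₀' : Bornology.IsBounded (Set.range (altOrbit c₁ c₂ z₀)) := hz₀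
    obtain ⟨C, hC⟩ := isBounded_iff_forall_norm_le.mp hz₀'
    have h2 : (2 : ℝ) < ‖z₀‖ := lt_of_le_of_lt (le_max_left _ _) h
    have hl : (1 : ℝ) < ‖z₀‖ - 1 := by linarith
    obtain ⟨n, hn⟩ := pow_unbounded_of_one_lt C hl
    have hgrow := altOrbit_growth c₁ c₂ z₀ h n
    have hCn : ‖(altOrbit c₁ c₂ z₀ n)‖ ≤ C := by
      simpa using hC _ (Set.mem_range_self n)
    have : (‖z₀‖ - 1) ^ n ≤ (‖z₀‖ - 1) ^ n * ‖z₀‖ := by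
      nlinarith [pow_pos (by linarith : (0:ℝ) < ‖z₀‖ - 1) n]
    linarith
  exact ⟨hsub, (Metric.isBounded_closedBall).subset hsub⟩
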